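/- Let q, d ≥ 1, n ≥ 1, and 1 ≤ k ≤ q, m = q(d+1), and partition {1,…,m} into q consecutive blocks v(1),…,v(q) of size d+1. Let Δ^m_Ω = {λ ∈ ℝ^m : λ ≥ 0, Σ_a λ_a = 1, and λ_a λ_b = 0 whenever a and b lie in different blocks}, and let W_1, …, W_n be symmetric m×m real matrices. Then the infimum of Σ_{i=1}^n λ_iᵀ W_i λ_i over all tuples (λ_*, λ_1, …, λ_n) with λ_* ≥ 0 componentwise, Σ_a (λ_*)_a = k, ⟨(λ_*)_{v(s)}, e⟩ · (λ_*)_{v(s)} = (λ_*)_{v(s)} for every s, and λ_i ∈ Δ^m_Ω with λ_i ≤ λ_* componentwise for every i, equals the infimum of Σ_{i=1}^n (λ^{σ(i)})ᵀ W_i λ^{σ(i)} over all pairwise blockwise orthogonal families λ^1, …, λ^k ∈ Δ^m_Ω (for all j ≠ j' and all s, λ^j_{v(s)} (λ^{j'}_{v(s)})ᵀ = 0) and all assignment maps σ : {1,…,n} → {1,…,k}. -/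

import Mathlib

open Matrix

/-- A vector with entries summing to 1 and vanishing cross-block products is
supported on the single block containing any nonzero entry. -/
lemma aux_block {q d : ℕ} (v : Fin q × Fin (d + 1) → ℝ)
    (hsum : ∑ a, v a = 1)
    (horth : ∀ a b : Fin q × Fin (d + 1), a.1 ≠ b.1 → v a * v b = 0)
    {s : Fin q} {i : Fin (d + 1)} (hne : v (s, i) ≠ 0) :
    (∀ b : Fin q × Fin (d + 1), b.1 ≠ s → v b = 0) ∧ ∑ i', v (s, i') = 1 := by
  have off : ∀ b : Fin q × Fin (d + 1), b.1 ≠ s → v b = 0 := by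
    intro b hb
    have := horth b (s, i) hb
    rcases mul_eq_zero.mp this with h | h
    · exact h
    · exact absurd h hne
  refine ⟨off, ?_⟩
  rw [Fintype.sum_prod_type] at hsum
  rwa [Finset.sum_eq_single s
    (fun b _ hb => Finset.sum_eq_zero fun i' _ => off (b, i') hb)
    (fun h => absurd (Finset.mem_univ s) h)] at hsum

theorem stmt14 (q d n k : ℕ) (hq : 1 ≤ q) (hd : 1 ≤ d) (hn : 1 ≤ n)
    (hk1 : 1 ≤ k) (hkq : k ≤ q)
    (W : Fin n → Matrix (Fin q × Fin (d + 1)) (Fin q × Fin (d + 1)) ℝ)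
    (hW : ∀ i, (W i).IsSymm) :
    sInf {r : ℝ | ∃ (lamStar : Fin q × Fin (d + 1) → ℝ)
        (lam : Fin n → (Fin q × Fin (d + 1) → ℝ)),
        (∀ a, 0 ≤ lamStar a) ∧
        (∑ a, lamStar a = (k : ℝ)) ∧
        (∀ (s : Fin q) (i : Fin (d + 1)),
          (∑ i' : Fin (d + 1), lamStar (s, i')) * lamStar (s, i) = lamStar (s, i)) ∧
        (∀ i, ∀ a, 0 ≤ lam i a) ∧
        (∀ i, ∑ a, lam i a = 1) ∧
        (∀ i, ∀ a b : Fin q × Fin (d + 1), a.1 ≠ b.1 → lam i a * lam i b = 0) ∧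
        (∀ i, ∀ a, lam i a ≤ lamStar a) ∧
        r = ∑ i, lam i ⬝ᵥ (W i).mulVec (lam i)} =
    sInf {r : ℝ | ∃ (lamJ : Fin k → (Fin q × Fin (d + 1) → ℝ)) (σ : Fin n → Fin k),
        (∀ j a, 0 ≤ lamJ j a) ∧
        (∀ j, ∑ a, lamJ j a = 1) ∧
        (∀ j, ∀ a b : Fin q × Fin (d + 1), a.1 ≠ b.1 → lamJ j a * lamJ j b = 0) ∧
        (∀ j j' : Fin k, j ≠ j' →
          ∀ (s : Fin q) (i i' : Fin (d + 1)), lamJ j (s, i) * lamJ j' (s, i') = 0) ∧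
        r = ∑ i, lamJ (σ i) ⬝ᵥ (W i).mulVec (lamJ (σ i))} := by
  classical
  congr 1
  ext r
  simp only [Set.mem_setOf_eq]
  constructor
  · -- (R2) point → separated form
    rintro ⟨ls, lam, h1, h2, h3, h4, h5, h6, h7, rfl⟩
    set t : Fin q → ℝ := fun s => ∑ i', ls (s, i') with ht
    have htt : ∀ s, t s = 0 ∨ t s = 1 := by
      intro s
      have hts : t s * t s = t s := by
        rw [ht]
        simp only
        rw [Finset.mul_sum]
        exact Finset.sum_congr rfl fun i _ => h3 s i
      have : t s * (t s - 1) = 0 := by ring_nf; linarith [hts]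
      rcases mul_eq_zero.mp this with h | h
      · exact Or.inl h
      · right; linarith
    set S : Finset (Fin q) := Finset.univ.filter (fun s => t s = 1) with hS
    have hcard : S.card = k := by
      have hsum1 : ∑ s, t s = (k : ℝ) := by
        rw [← h2, Fintype.sum_prod_type]
      have hsum2 : ∑ s, t s = (S.card : ℝ) := by
        calc ∑ s, t s = ∑ s, (if t s = 1 then (1 : ℝ) else 0) :=
              Finset.sum_congr rfl (fun s _ => by rcases htt s with h | h <;> simp [h])
          _ = (S.card : ℝ) := by rw [Finset.sum_boole, hS]
      have : ((S.card : ℕ) : ℝ) = (k : ℝ) := by rw [← hsum2, hsum1]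
      exact_mod_cast this
    -- bijection Fin k ≃ S
    let e : S ≃ Fin S.card := S.equivFin
    let f : Fin k → Fin q := fun j => (e.symm (Fin.cast hcard.symm j) : Fin q)
    have hf_inj : Function.Injective f := by
      intro j j' hjj
      have := e.symm.injective (Subtype.val_injective hjj)
      exact Fin.ext (by simpa using congrArg Fin.val this)
    have hf_mem : ∀ j, t (f j) = 1 := by
      intro j
      have := (e.symm (Fin.cast hcard.symm j)).2
      exact (Finset.mem_filter.mp this).2
    have hf_surj : ∀ s : Fin q, t s = 1 → ∃ j, f j = s := by
      intro s hs
      refine ⟨Fin.cast hcard (e ⟨s, by rw [hS, Finset.mem_filter]; exact ⟨Finset.mem_univ s, hs⟩⟩), ?_⟩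
      simp only [f]
      rw [Fin.cast_cast]
      simp
    -- each lam i equals ls restricted to a block f j
    have hex : ∀ i, ∃ j : Fin k, lam i = fun b => if b.1 = f j then ls b else 0 := by
      intro i
      have hnz : ∃ a, lam i a ≠ 0 := by
        by_contra hc
        push_neg at hc
        have : (1 : ℝ) = 0 := by rw [← h5 i]; exact Finset.sum_eq_zero fun a _ => hc a
        norm_num at this
      obtain ⟨a, ha⟩ := hnz
      obtain ⟨hoff, hblk⟩ := aux_block (lam i) (h5 i) (h6 i) (show lam i (a.1, a.2) ≠ 0 by simpa using ha)
      have hls_pos : ls a ≠ 0 := by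
        intro h0
        have := h7 i a
        have hge := h4 i a
        rw [h0] at this
        exact ha (le_antisymm this hge)
      have hta : t a.1 = 1 := by
        rcases htt a.1 with h0 | h1
        · exfalso
          have h3a := h3 a.1 a.2
          rw [show (∑ i' : Fin (d+1), ls (a.1, i')) = t a.1 from rfl, h0, zero_mul] at h3a
          exact hls_pos (by simpa using h3a.symm)
        · exact h1
      -- ls equals lam i on block a.1
      have heqblk : ∀ i' : Fin (d + 1), ls (a.1, i') = lam i (a.1, i') := by
        have hzero : ∑ i' : Fin (d+1), (ls (a.1, i') - lam i (a.1, i')) = 0 := by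
          rw [Finset.sum_sub_distrib, hblk]
          rw [show (∑ i' : Fin (d+1), ls (a.1, i')) = t a.1 from rfl, hta]
          ring
        intro i'
        have := (Finset.sum_eq_zero_iff_of_nonneg
          (fun x _ => sub_nonneg.mpr (h7 i (a.1, x)))).mp hzero i' (Finset.mem_univ i')
        linarith [this]
      obtain ⟨j, hj⟩ := hf_surj a.1 hta
      refine ⟨j, funext fun b => ?_⟩
      rw [hj]
      by_cases hb : b.1 = a.1
      · rw [if_pos hb]
        have := heqblk b.2
        rw [show ((a.1 : Fin q), b.2) = b from Prod.ext hb.symm rfl] at this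
        exact this.symm
      · rw [if_neg hb]
        exact hoff b hb
    choose σ hσ using hex
    refine ⟨fun j b => if b.1 = f j then ls b else 0, σ, ?_, ?_, ?_, ?_, ?_⟩
    · intro j a
      dsimp only
      split
      · exact h1 a
      · exact le_rfl
    · intro j
      dsimp only
      rw [Fintype.sum_prod_type]
      calc ∑ s, ∑ i' : Fin (d+1), (if s = f j then ls (s, i') else 0)
          = ∑ s, (if s = f j then t s else 0) := by
            refine Finset.sum_congr rfl fun s _ => ?_
            split
            · rfl
            · exact Finset.sum_eq_zero fun i' _ => rfl
        _ = t (f j) := by rw [Finset.sum_ite_eq' Finset.univ (f j) t]; simp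
        _ = 1 := hf_mem j
    · intro j a b hab
      dsimp only
      split
      · split
        · rename_i h1' h2'
          exact absurd (h1'.trans h2'.symm) hab
        · ring
      · ring
    · intro j j' hjj s i i'
      dsimp only
      split
      · split
        · rename_i ha hb
          exact absurd (hf_inj (ha.symm.trans hb)) hjj
        · ring
      · ring
    · refine Finset.sum_congr rfl fun i _ => ?_
      dsimp only
      rw [← hσ i]
  · -- separated form → (R2) point
    rintro ⟨lamJ, σ, g1, g2, g3, g4, rfl⟩
    refine ⟨fun a => ∑ j, lamJ j a, fun i => lamJ (σ i), ?_, ?_, ?_, ?_, ?_, ?_, ?_, rfl⟩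
    · intro a
      exact Finset.sum_nonneg fun j _ => g1 j a
    · rw [Finset.sum_comm]
      calc ∑ j, ∑ a, lamJ j a = ∑ j : Fin k, (1 : ℝ) :=
            Finset.sum_congr rfl fun j _ => g2 j
        _ = (k : ℝ) := by simp
    · intro s i
      dsimp only
      by_cases hx : (∑ j, lamJ j (s, i)) = 0
      · rw [hx, mul_zero]
      · obtain ⟨j0, hj0⟩ : ∃ j0, lamJ j0 (s, i) ≠ 0 := by
          by_contra hc
          push_neg at hc
          exact hx (Finset.sum_eq_zero fun j _ => hc j)
        have hothers : ∀ j, j ≠ j0 → ∀ i' : Fin (d+1), lamJ j (s, i') = 0 := by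
          intro j hj i'
          rcases mul_eq_zero.mp (g4 j j0 hj s i' i) with h | h
          · exact h
          · exact absurd h hj0
        obtain ⟨_, hblk⟩ := aux_block (lamJ j0) (g2 j0) (g3 j0) hj0
        have hsum1 : (∑ i' : Fin (d+1), ∑ j, lamJ j (s, i')) = 1 := by
          calc ∑ i' : Fin (d+1), ∑ j, lamJ j (s, i')
              = ∑ i' : Fin (d+1), lamJ j0 (s, i') := by
                refine Finset.sum_congr rfl fun i' _ => ?_
                exact Finset.sum_eq_single j0 (fun j _ hj => hothers j hj i')
                  (fun h => absurd (Finset.mem_univ j0) h)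
            _ = 1 := hblk
        rw [hsum1, one_mul]
    · intro i a; exact g1 (σ i) a
    · intro i; exact g2 (σ i)
    · intro i a b hab; exact g3 (σ i) a b hab
    · intro i a
      exact Finset.single_le_sum (fun j _ => g1 j a) (Finset.mem_univ (σ i))
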